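/- arXiv:1212.3274 — 2 statements merged into one kernel-verified Lean document; each statement's English description precedes it below -/
import Mathlib

section
/- Let W be a group with finite generating set S = S⁻¹ whose geodesic normal form Red(W) is regular and satisfies the k-fellow-traveler property for some k. Then the set L = {(α,β) ∈ Red(W) × Red(W) : ᾱ = β̄} of pairs of geodesic words representing the same group element is a regular language of pairs. -/
namespace Stmt4

variable {W : Type*} [Group W]

/-- The element of `W` represented by a word over the generating set `S`. -/
def toElem (S : Finset W) (α : List {x // x ∈ S}) : W := (α.map Subtype.val).prod

/-- The word length of `w` with respect to `S`. -/
noncomputable def wlen (S : Finset W) (w : W) : ℕ :=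
  sInf {n | ∃ α : List {x // x ∈ S}, toElem S α = w ∧ α.length = n}

/-- The geodesic normal form: words whose length equals the word length of their image. -/
def Red (S : Finset W) : Language {x // x ∈ S} :=
  {α | α.length = wlen S (toElem S α)}

/-- The word-metric distance in the Cayley graph. -/
noncomputable def dS (S : Finset W) (u v : W) : ℕ := wlen S (u⁻¹ * v)

/-- Two words are (synchronous) `k`-fellow-travelers if corresponding prefixes stay
within distance `k` (prefixes beyond a word's length are the whole word). -/
def FellowTravel (S : Finset W) (k : ℕ) (α β : List {x // x ∈ S}) : Prop :=
  ∀ i : ℕ, dS S (toElem S (α.take i)) (toElem S (β.take i)) ≤ k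

/-- Padded encoding of a pair of words over the product alphabet. -/
def padPair {A : Type*} (α β : List A) : List (Option A × Option A) :=
  (List.range (max α.length β.length)).map fun i => (α[i]?, β[i]?)

/-! ### Auxiliary material -/

section Aux

variable (S : Finset W)

lemma toElem_append (α β : List {x // x ∈ S}) :
    toElem S (α ++ β) = toElem S α * toElem S β := by
  simp [toElem]

/-- The element of `W` represented by an optional letter. -/
def elem (a? : Option {x // x ∈ S}) : W := (a?.map Subtype.val).getD 1

lemma toElem_toList (a? : Option {x // x ∈ S}) :
    toElem S a?.toList = elem S a? := by
  cases a? <;> simp [toElem, elem]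

/-- Every group element is represented by some word (using that `S` generates and is
symmetric). -/
lemma exists_word (hgen : Subgroup.closure (S : Set W) = ⊤)
    (hsym : ∀ s ∈ S, s⁻¹ ∈ S) (w : W) :
    ∃ α : List {x // x ∈ S}, toElem S α = w := by
  have hw : w ∈ Subgroup.closure (S : Set W) := by rw [hgen]; trivial
  refine Subgroup.closure_induction (p := fun x _ => ∃ α : List {x // x ∈ S}, toElem S α = x)
    ?_ ?_ ?_ ?_ hw
  · intro x hx
    exact ⟨[⟨x, hx⟩], by simp [toElem]⟩
  · exact ⟨[], by simp [toElem]⟩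
  · rintro x y _ _ ⟨α, hα⟩ ⟨β, hβ⟩
    exact ⟨α ++ β, by rw [toElem_append, hα, hβ]⟩
  · rintro x _ ⟨α, hα⟩
    refine ⟨(α.map fun a => ⟨a.val⁻¹, hsym _ a.2⟩).reverse, ?_⟩
    subst hα
    show (List.map Subtype.val _).prod = _
    rw [List.map_reverse, List.map_map]
    have hc : (Subtype.val ∘ fun a : {x // x ∈ S} => (⟨(a : W)⁻¹, hsym _ a.2⟩ : {x // x ∈ S}))
        = (fun x => x⁻¹) ∘ (Subtype.val : {x // x ∈ S} → W) := rfl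
    rw [hc, ← List.map_map]
    exact (List.prod_inv_reverse (α.map Subtype.val)).symm

lemma wlen_exists (hgen : Subgroup.closure (S : Set W) = ⊤)
    (hsym : ∀ s ∈ S, s⁻¹ ∈ S) (w : W) :
    ∃ α : List {x // x ∈ S}, toElem S α = w ∧ α.length = wlen S w := by
  have hne : {n | ∃ α : List {x // x ∈ S}, toElem S α = w ∧ α.length = n}.Nonempty := by
    obtain ⟨α, hα⟩ := exists_word S hgen hsym w
    exact ⟨α.length, α, hα, rfl⟩
  exact Nat.sInf_mem hne

/-- The ball of radius `k` around the identity, as a set. -/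
def ballSet (k : ℕ) : Set W := {w | ∃ α : List {x // x ∈ S}, toElem S α = w ∧ α.length ≤ k}

lemma one_mem_ballSet (k : ℕ) : (1 : W) ∈ ballSet S k :=
  ⟨[], by simp [toElem], by simp⟩

lemma mem_ballSet_of_wlen_le (hgen : Subgroup.closure (S : Set W) = ⊤)
    (hsym : ∀ s ∈ S, s⁻¹ ∈ S) {k : ℕ} {w : W} (h : wlen S w ≤ k) :
    w ∈ ballSet S k := by
  obtain ⟨α, hα, hlen⟩ := wlen_exists S hgen hsym w
  exact ⟨α, hα, hlen ▸ h⟩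

lemma ballSet_finite (k : ℕ) : (ballSet S k).Finite := by
  have : ballSet S k ⊆ (fun α : List {x // x ∈ S} => toElem S α) ''
      {α | α.length ≤ k} := by
    rintro w ⟨α, hα, hlen⟩
    exact ⟨α, hlen, hα⟩
  exact ((List.finite_length_le _ k).image _).subset this

lemma padPair_length {A : Type*} (α β : List A) :
    (padPair α β).length = max α.length β.length := by
  simp [padPair]

lemma padPair_getElem {A : Type*} (α β : List A) (i : ℕ) (h : i < (padPair α β).length) :
    (padPair α β)[i] = (α[i]?, β[i]?) := by
  simp [padPair]

lemma eq_padPair {A : Type*} (w : List (Option A × Option A)) (α β : List A)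
    (hlen : w.length = max α.length β.length)
    (h : ∀ i (hi : i < w.length), w[i] = (α[i]?, β[i]?)) : w = padPair α β := by
  refine List.ext_getElem (by rw [hlen, padPair_length]) ?_
  intro i h1 h2
  rw [h i h1, padPair_getElem]

lemma padPair_concat {A : Type*} (w : List (Option A × Option A)) (α β : List A)
    (hw : w = padPair α β) (a? b? : Option A)
    (hnn : ¬(a? = none ∧ b? = none))
    (ha : a?.isSome → α.length = w.length)
    (hb : b?.isSome → β.length = w.length) :
    w ++ [(a?, b?)] = padPair (α ++ a?.toList) (β ++ b?.toList) := by
  have hαle : α.length ≤ w.length := by rw [hw, padPair_length]; exact le_max_left _ _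
  have hβle : β.length ≤ w.length := by rw [hw, padPair_length]; exact le_max_right _ _
  have hmax : max (α ++ a?.toList).length (β ++ b?.toList).length = w.length + 1 := by
    rcases Option.eq_none_or_eq_some a? with ha' | ⟨a, ha'⟩
    · rcases Option.eq_none_or_eq_some b? with hb' | ⟨b, hb'⟩
      · exact absurd ⟨ha', hb'⟩ hnn
      · subst ha'; subst hb'
        have := hb (by simp)
        simp only [List.length_append, Option.toList_none, Option.toList_some,
          List.length_nil, List.length_cons, List.length, Nat.add_zero]
        omega
    · subst ha'
      have := ha (by simp)
      rcases Option.eq_none_or_eq_some b? with hb' | ⟨b, hb'⟩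
      · subst hb'
        simp only [List.length_append, Option.toList_none, Option.toList_some,
          List.length_nil, List.length_cons, List.length, Nat.add_zero]
        omega
      · subst hb'
        have := hb (by simp)
        simp only [List.length_append, Option.toList_some, List.length_cons, List.length]
        omega
  refine eq_padPair _ _ _ (by simpa using hmax.symm) ?_
  intro i hi
  simp only [List.length_append, List.length_cons, List.length_nil] at hi
  rcases Nat.lt_or_ge i w.length with hlt | hge
  · have hwi : w[i]'hlt = (α[i]?, β[i]?) := by
      subst hw; exact padPair_getElem α β i hlt
    rw [List.getElem_append_left hlt, hwi]
    have h1 : (α ++ a?.toList)[i]? = α[i]? := by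
      rcases Nat.lt_or_ge i α.length with h' | h'
      · rw [List.getElem?_append_left h']
      · have hanone : a? = none := by
          by_contra hns
          have : a?.isSome := Option.ne_none_iff_isSome.mp hns
          have := ha this
          omega
        subst hanone; simp
    have h2 : (β ++ b?.toList)[i]? = β[i]? := by
      rcases Nat.lt_or_ge i β.length with h' | h'
      · rw [List.getElem?_append_left h']
      · have hbnone : b? = none := by
          by_contra hns
          have : b?.isSome := Option.ne_none_iff_isSome.mp hns
          have := hb this
          omega
        subst hbnone; simp
    rw [h1, h2]
  · have hieq : i = w.length := by omega
    subst hieq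
    rw [List.getElem_append_right (le_refl _)]
    simp only [Nat.sub_self, List.getElem_cons_zero]
    have h1 : (α ++ a?.toList)[w.length]? = a? := by
      rcases Option.eq_none_or_eq_some a? with ha' | ⟨a, ha'⟩
      · subst ha'
        apply List.getElem?_eq_none
        simpa using hαle
      · subst ha'
        have hae := ha (by simp)
        rw [List.getElem?_append_right (by omega)]
        simp [hae]
    have h2 : (β ++ b?.toList)[w.length]? = b? := by
      rcases Option.eq_none_or_eq_some b? with hb' | ⟨b, hb'⟩
      · subst hb'
        apply List.getElem?_eq_none
        simpa using hβle
      · subst hb'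
        have hbe := hb (by simp)
        rw [List.getElem?_append_right (by omega)]
        simp [hbe]
    rw [h1, h2]

variable {σ : Type} (k : ℕ)

open Classical in
/-- The product automaton recognizing pairs of geodesics representing equal elements. -/
noncomputable def pairDFA (M : DFA {x // x ∈ S} σ) :
    DFA (Option {x // x ∈ S} × Option {x // x ∈ S})
      (Option ((σ × σ) × (ballSet S k) × Bool × Bool)) where
  step := fun st c =>
    match st with
    | none => none
    | some ((p, q), g, fa, fb) =>
      if (c.1.isNone && c.2.isNone) || (fa && c.1.isSome) || (fb && c.2.isSome) then none
      else if h : (elem S c.1)⁻¹ * (g : W) * elem S c.2 ∈ ballSet S k then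
        some ((c.1.elim p (M.step p), c.2.elim q (M.step q)), ⟨_, h⟩,
          fa || c.1.isNone, fb || c.2.isNone)
      else none
  start := some ((M.start, M.start), ⟨1, one_mem_ballSet S k⟩, false, false)
  accept := {st | ∃ p q g fa fb, st = some ((p, q), g, fa, fb) ∧
      p ∈ M.accept ∧ q ∈ M.accept ∧ (g : W) = 1}

variable (M : DFA {x // x ∈ S} σ)

lemma pairDFA_step_none (c) : (pairDFA S k M).step none c = none := rfl

open Classical in
lemma pairDFA_step_some (p q g fa fb c) :
    (pairDFA S k M).step (some ((p, q), g, fa, fb)) c =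
      (if (c.1.isNone && c.2.isNone) || (fa && c.1.isSome) || (fb && c.2.isSome) then none
       else if h : (elem S c.1)⁻¹ * (g : W) * elem S c.2 ∈ ballSet S k then
        some ((c.1.elim p (M.step p), c.2.elim q (M.step q)), ⟨_, h⟩,
          fa || c.1.isNone, fb || c.2.isNone)
       else none) := rfl

lemma eval_opt (s : σ) (a? : Option {x // x ∈ S}) (α : List {x // x ∈ S}) :
    M.evalFrom s (α ++ a?.toList) = a?.elim (M.evalFrom s α) (M.step (M.evalFrom s α)) := by
  cases a? with
  | none => simp
  | some a => simp [DFA.evalFrom_append_singleton]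

/-- The main invariant of a run of `pairDFA`. -/
lemma pairDFA_invariant (w : List (Option {x // x ∈ S} × Option {x // x ∈ S})) :
    (pairDFA S k M).eval w = none ∨
    ∃ (α β : List {x // x ∈ S}) (g : ballSet S k),
      (g : W) = (toElem S α)⁻¹ * toElem S β ∧ w = padPair α β ∧
      (pairDFA S k M).eval w = some ((M.eval α, M.eval β), g,
        decide (α.length < w.length), decide (β.length < w.length)) := by
  induction w using List.reverseRecOn with
  | nil =>
      right
      refine ⟨[], [], ⟨1, one_mem_ballSet S k⟩, by simp [toElem], rfl, ?_⟩
      simp [DFA.eval_nil, pairDFA, DFA.eval, toElem]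
  | append_singleton w c ih =>
      rw [DFA.eval_append_singleton]
      rcases ih with h | ⟨α, β, g, hg, hw, he⟩
      · left; rw [h]; rfl
      rw [he]
      obtain ⟨a?, b?⟩ := c
      rw [pairDFA_step_some]
      by_cases hguard :
          ((a?.isNone && b?.isNone) || (decide (α.length < w.length) && a?.isSome)
            || (decide (β.length < w.length) && b?.isSome)) = true
      · left; simp only [hguard, if_true]
      rw [if_neg (by simpa using hguard)]
      simp only [Bool.or_eq_true, Bool.and_eq_true, decide_eq_true_eq, not_or, not_and] at hguard
      obtain ⟨⟨hnn, hfa⟩, hfb⟩ := hguard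
      have hαle : α.length ≤ w.length := by rw [hw, padPair_length]; exact le_max_left _ _
      have hβle : β.length ≤ w.length := by rw [hw, padPair_length]; exact le_max_right _ _
      have ha : a?.isSome → α.length = w.length := by
        intro hs
        have := hfa; by_contra hne
        exact absurd hs (by simpa using this (by omega))
      have hb : b?.isSome → β.length = w.length := by
        intro hs
        have := hfb; by_contra hne
        exact absurd hs (by simpa using this (by omega))
      by_cases hball : (elem S a?)⁻¹ * (g : W) * elem S b? ∈ ballSet S k
      · right
        rw [dif_pos hball]
        refine ⟨α ++ a?.toList, β ++ b?.toList, ⟨_, hball⟩, ?_, ?_, ?_⟩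
        · simp only [toElem_append, toElem_toList, hg, mul_inv_rev]
          group
        · refine padPair_concat w α β hw a? b? ?_ ha hb
          rintro ⟨h1, h2⟩
          simp [h1, h2] at hnn
        · congr 1
          refine Prod.ext ?_ (Prod.ext rfl (Prod.ext ?_ ?_))
          · dsimp only
            rw [Prod.mk.injEq]
            constructor
            · exact (eval_opt S M M.start a? α).symm
            · exact (eval_opt S M M.start b? β).symm
          · show (decide (α.length < w.length) || a?.isNone) =
                decide ((α ++ a?.toList).length < (w ++ [(a?, b?)]).length)
            rcases Option.eq_none_or_eq_some a? with ha' | ⟨a, ha'⟩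
            · subst ha'
              have h2 : (α ++ (none : Option _).toList).length < (w ++ [(none, b?)]).length := by
                simp only [List.length_append, List.length_cons, List.length_nil,
                  Option.toList_none]
                omega
              rw [decide_eq_true h2]
              simp
            · subst ha'
              have hae := ha (by simp)
              have h1 : decide (α.length < w.length) = false :=
                decide_eq_false (by omega)
              have h2 : decide ((α ++ (some a).toList).length < (w ++ [(some a, b?)]).length)
                  = false := by
                refine decide_eq_false ?_
                simp only [List.length_append, List.length_cons, List.length_nil,
                  Option.toList_some]
                omega
              rw [h1, h2]
              simp
          · show (decide (β.length < w.length) || b?.isNone) =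
                decide ((β ++ b?.toList).length < (w ++ [(a?, b?)]).length)
            rcases Option.eq_none_or_eq_some b? with hb' | ⟨b, hb'⟩
            · subst hb'
              have h2 : (β ++ (none : Option _).toList).length < (w ++ [(a?, none)]).length := by
                simp only [List.length_append, List.length_cons, List.length_nil,
                  Option.toList_none]
                omega
              rw [decide_eq_true h2]
              simp
            · subst hb'
              have hbe := hb (by simp)
              have h1 : decide (β.length < w.length) = false :=
                decide_eq_false (by omega)
              have h2 : decide ((β ++ (some b).toList).length < (w ++ [(a?, some b)]).length)
                  = false := by
                refine decide_eq_false ?_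
                simp only [List.length_append, List.length_cons, List.length_nil,
                  Option.toList_some]
                omega
              rw [h1, h2]
              simp
      · left
        rw [dif_neg hball]

/-- Completeness: fellow-traveling geodesics are tracked by the automaton. -/
lemma pairDFA_eval_padPair (hgen : Subgroup.closure (S : Set W) = ⊤)
    (hsym : ∀ s ∈ S, s⁻¹ ∈ S)
    (α β : List {x // x ∈ S})
    (hk : ∀ i, wlen S ((toElem S (α.take i))⁻¹ * toElem S (β.take i)) ≤ k) :
    ∀ i, i ≤ (padPair α β).length →
      ∃ g : ballSet S k, (g : W) = (toElem S (α.take i))⁻¹ * toElem S (β.take i) ∧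
        (pairDFA S k M).eval ((padPair α β).take i) = some
          ((M.eval (α.take i), M.eval (β.take i)), g,
            decide (α.length < i), decide (β.length < i)) := by
  intro i
  induction i with
  | zero =>
      intro _
      refine ⟨⟨1, one_mem_ballSet S k⟩, by simp [toElem], ?_⟩
      simp [DFA.eval_nil, pairDFA, DFA.eval, toElem]
  | succ i ih =>
      intro hile
      have hi : i < (padPair α β).length := by omega
      obtain ⟨g, hg, he⟩ := ih (by omega)
      have htake : (padPair α β).take (i + 1) = (padPair α β).take i ++ [(α[i]?, β[i]?)] := by
        rw [List.take_succ, List.getElem?_eq_getElem hi, padPair_getElem _ _ _ hi]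
        rfl
      rw [htake, DFA.eval_append_singleton, he, pairDFA_step_some]
      have hin : i < max α.length β.length := by rwa [padPair_length] at hi
      have hguard : ((α[i]?.isNone && β[i]?.isNone)
          || (decide (α.length < i) && α[i]?.isSome)
          || (decide (β.length < i) && β[i]?.isSome)) = false := by
        rcases Nat.lt_or_ge i α.length with hia | hia
        · have hsa : α[i]? = some (α[i]'hia) := List.getElem?_eq_getElem hia
          have h2 : ¬ α.length < i := by omega
          rcases Nat.lt_or_ge i β.length with hib | hib
          · have hsb : β[i]? = some (β[i]'hib) := List.getElem?_eq_getElem hib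
            have h4 : ¬ β.length < i := by omega
            simp [hsa, hsb, h2, h4]
          · have hsb : β[i]? = none := List.getElem?_eq_none hib
            simp [hsa, hsb, h2]
        · have hsa : α[i]? = none := List.getElem?_eq_none hia
          have hib : i < β.length := by omega
          have hsb : β[i]? = some (β[i]'hib) := List.getElem?_eq_getElem hib
          have h4 : ¬ β.length < i := by omega
          simp [hsa, hsb, h4]
      rw [if_neg (by simp [hguard])]
      have hval : (elem S α[i]?)⁻¹ * (g : W) * elem S β[i]? =
          (toElem S (α.take (i + 1)))⁻¹ * toElem S (β.take (i + 1)) := by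
        rw [List.take_succ, List.take_succ, toElem_append, toElem_append,
          toElem_toList, toElem_toList, hg, mul_inv_rev]
        group
      have hball : (elem S α[i]?)⁻¹ * (g : W) * elem S β[i]? ∈ ballSet S k := by
        rw [hval]
        exact mem_ballSet_of_wlen_le S hgen hsym (hk (i + 1))
      rw [dif_pos hball]
      refine ⟨⟨_, hball⟩, hval, ?_⟩
      congr 1
      refine Prod.ext ?_ (Prod.ext rfl (Prod.ext ?_ ?_))
      · dsimp only
        rw [Prod.mk.injEq]
        have e1 : M.eval (α.take (i + 1)) = α[i]?.elim (M.eval (α.take i))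
            (M.step (M.eval (α.take i))) := by
          rw [List.take_succ]; exact eval_opt S M M.start _ _
        have e2 : M.eval (β.take (i + 1)) = β[i]?.elim (M.eval (β.take i))
            (M.step (M.eval (β.take i))) := by
          rw [List.take_succ]; exact eval_opt S M M.start _ _
        exact ⟨e1.symm, e2.symm⟩
      · show (decide (α.length < i) || α[i]?.isNone) = decide (α.length < i + 1)
        rcases Nat.lt_or_ge i α.length with h' | h'
        · have h1 : α[i]?.isNone = false := by
            simp [List.getElem?_eq_getElem h']
          have h2 : ¬ α.length < i := by omega
          have h3 : ¬ α.length < i + 1 := by omega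
          simp [h1, h2, h3]
        · have h1 : α[i]?.isNone = true := by
            simp [List.getElem?_eq_none h']
          have h2 : α.length < i + 1 := by omega
          simp [h1, h2]
      · show (decide (β.length < i) || β[i]?.isNone) = decide (β.length < i + 1)
        rcases Nat.lt_or_ge i β.length with h' | h'
        · have h1 : β[i]?.isNone = false := by
            simp [List.getElem?_eq_getElem h']
          have h2 : ¬ β.length < i := by omega
          have h3 : ¬ β.length < i + 1 := by omega
          simp [h1, h2, h3]
        · have h1 : β[i]?.isNone = true := by
            simp [List.getElem?_eq_none h']
          have h2 : β.length < i + 1 := by omega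
          simp [h1, h2]

end Aux

/-- If `Red(W)` is regular and has the `k`-fellow-traveler property, then the set of pairs
of geodesic words representing the same group element is a regular language of pairs. -/
theorem equality_pairs_regular (S : Finset W)
    (hgen : Subgroup.closure (S : Set W) = ⊤)
    (hsym : ∀ s ∈ S, s⁻¹ ∈ S) (k : ℕ)
    (hreg : (Red S).IsRegular)
    (hft : ∀ α ∈ Red S, ∀ β ∈ Red S, ∀ t : W, (t ∈ S ∨ t = 1) →
      toElem S α = toElem S β * t → FellowTravel S k α β) :
    Language.IsRegular
      ({w | ∃ α ∈ Red S, ∃ β ∈ Red S, toElem S α = toElem S β ∧ w = padPair α β} :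
        Language (Option {x // x ∈ S} × Option {x // x ∈ S})) := by
  obtain ⟨σ, hfin, M, hM⟩ := hreg
  haveI : Fintype σ := hfin
  haveI : Fintype (ballSet S k) := (ballSet_finite S k).fintype
  obtain ⟨n, ⟨eB⟩⟩ : ∃ n, Nonempty (↥(ballSet S k) ≃ Fin n) :=
    ⟨_, ⟨Fintype.equivFin _⟩⟩
  let eq : (Option ((σ × σ) × ↥(ballSet S k) × Bool × Bool)) ≃
      (Option ((σ × σ) × Fin n × Bool × Bool)) :=
    Equiv.optionCongr ((Equiv.refl _).prodCongr (eB.prodCongr (Equiv.refl _)))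
  refine ⟨Option ((σ × σ) × Fin n × Bool × Bool), inferInstance,
    DFA.reindex eq (pairDFA S k M), ?_⟩
  rw [DFA.accepts_reindex]
  ext w
  constructor
  · intro hw
    rw [DFA.mem_accepts] at hw
    obtain ⟨p, q, g, fa, fb, heval, hp, hq, hg1⟩ := hw
    rcases pairDFA_invariant S k M w with h | ⟨α, β, g', hg', hww, he⟩
    · rw [h] at heval; exact absurd heval (by simp)
    rw [he] at heval
    have hinj := Option.some_injective _ heval
    have hps : M.eval α = p := congrArg (fun x => x.1.1) hinj
    have hqs : M.eval β = q := congrArg (fun x => x.1.2) hinj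
    have hgs : g' = g := congrArg (fun x => x.2.1) hinj
    have hone : (toElem S α)⁻¹ * toElem S β = 1 := by
      rw [← hg', hgs, hg1]
    have heqel : toElem S α = toElem S β := inv_mul_eq_one.mp hone
    refine ⟨α, ?_, β, ?_, heqel, hww⟩
    · rw [← hM, DFA.mem_accepts, hps]; exact hp
    · rw [← hM, DFA.mem_accepts, hqs]; exact hq
  · rintro ⟨α, hα, β, hβ, heq, hw⟩
    subst hw
    have hFT : FellowTravel S k α β :=
      hft α hα β hβ 1 (Or.inr rfl) (by rw [heq, mul_one])
    have hk : ∀ i, wlen S ((toElem S (α.take i))⁻¹ * toElem S (β.take i)) ≤ k := fun i => hFT i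
    obtain ⟨g, hg, he⟩ := pairDFA_eval_padPair S k M hgen hsym α β hk
      (padPair α β).length (le_refl _)
    rw [DFA.mem_accepts]
    have hαfull : α.take (padPair α β).length = α := by
      apply List.take_of_length_le
      rw [padPair_length]; exact le_max_left _ _
    have hβfull : β.take (padPair α β).length = β := by
      apply List.take_of_length_le
      rw [padPair_length]; exact le_max_right _ _
    rw [List.take_length] at he
    rw [hαfull, hβfull] at he hg
    refine ⟨M.eval α, M.eval β, g, _, _, he, ?_, ?_, ?_⟩
    · rw [← DFA.mem_accepts, hM]; exact hα
    · rw [← DFA.mem_accepts, hM]; exact hβ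
    · rw [hg, heq]; group

end Stmt4
end

section
/- Let W be a group with finite symmetric generating set S such that the language Red(W) of geodesic words is regular and has the k-fellow-traveler property for some k. For any fixed geodesic word μ, let X_μ = {w ∈ W : w = u·μ̄·v with l(w) = l(u)+l(μ̄)+l(v) for some u,v ∈ W}. Then the language Red(X_μ) of all geodesic words representing elements of X_μ is regular. -/
namespace Stmt5

variable {W : Type*} [Group W]

/-- The element of `W` represented by a word over the generating set `S`. -/
def toElem (S : Finset W) (α : List {x // x ∈ S}) : W := (α.map Subtype.val).prod

/-- The word length of `w` with respect to `S`. -/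
noncomputable def wlen (S : Finset W) (w : W) : ℕ :=
  sInf {n | ∃ α : List {x // x ∈ S}, toElem S α = w ∧ α.length = n}

/-- The geodesic normal form: words whose length equals the word length of their image. -/
def Red (S : Finset W) : Language {x // x ∈ S} :=
  {α | α.length = wlen S (toElem S α)}

/-- Word-metric distance. -/
noncomputable def dS (S : Finset W) (u v : W) : ℕ := wlen S (u⁻¹ * v)

/-- Synchronous `k`-fellow-traveling. -/
def FellowTravel (S : Finset W) (k : ℕ) (α β : List {x // x ∈ S}) : Prop :=
  ∀ i : ℕ, dS S (toElem S (α.take i)) (toElem S (β.take i)) ≤ k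

lemma toElem_append (S : Finset W) (a b : List {x // x ∈ S}) :
    toElem S (a ++ b) = toElem S a * toElem S b := by
  simp [toElem]

lemma toElem_singleton (S : Finset W) (a : {x // x ∈ S}) : toElem S [a] = (a : W) := by
  simp [toElem]

lemma wlen_le (S : Finset W) {w : W} {α : List {x // x ∈ S}} (h : toElem S α = w) :
    wlen S w ≤ α.length :=
  Nat.sInf_le ⟨α, h, rfl⟩

lemma exists_repr (S : Finset W) (hgen : Subgroup.closure (S : Set W) = ⊤)
    (hsym : ∀ s ∈ S, s⁻¹ ∈ S) (w : W) : ∃ α : List {x // x ∈ S}, toElem S α = w := by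
  have hw : w ∈ Subgroup.closure (S : Set W) := by rw [hgen]; trivial
  induction hw using Subgroup.closure_induction with
  | mem x hx => exact ⟨[⟨x, hx⟩], by simp [toElem]⟩
  | one => exact ⟨[], rfl⟩
  | mul x y _ _ hx hy =>
      obtain ⟨a, ha⟩ := hx; obtain ⟨b, hb⟩ := hy
      exact ⟨a ++ b, by rw [toElem_append, ha, hb]⟩
  | inv x _ hx =>
      obtain ⟨a, ha⟩ := hx
      refine ⟨(a.map (fun s => ⟨s.1⁻¹, hsym _ s.2⟩)).reverse, ?_⟩
      simp only [toElem, List.map_reverse, List.map_map]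
      rw [← ha]
      simp [toElem, ← List.prod_inv_reverse, Function.comp]

lemma exists_geodesic (S : Finset W) (hgen : Subgroup.closure (S : Set W) = ⊤)
    (hsym : ∀ s ∈ S, s⁻¹ ∈ S) (w : W) :
    ∃ α : List {x // x ∈ S}, toElem S α = w ∧ α.length = wlen S w := by
  obtain ⟨α, hα⟩ := exists_repr S hgen hsym w
  exact Nat.sInf_mem (⟨α.length, α, hα, rfl⟩ :
    {n | ∃ α : List {x // x ∈ S}, toElem S α = w ∧ α.length = n}.Nonempty)

variable (S : Finset W) (k : ℕ) {σ0 : Type} (M : DFA {x // x ∈ S} σ0)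
  (μ : List {x // x ∈ S})

/-- The nondeterministic automaton recognizing `Red(X_μ)`: it reads `α` while guessing a
fellow-traveling geodesic `β = β₁ ++ μ ++ β₂` with the same image, tracking the pair of
`Red`-automaton states, the word difference (in the ball of radius `k`), and the progress
through the factor `μ`. -/
def mach : NFA {x // x ∈ S} (σ0 × σ0 × {w : W // wlen S w ≤ k} × Fin (μ.length + 1)) where
  step q a := {p | p.1 = M.step q.1 a ∧ ∃ b : {x // x ∈ S},
      p.2.1 = M.step q.2.1 b ∧ (p.2.2.1 : W) = (a : W)⁻¹ * (q.2.2.1 : W) * (b : W) ∧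
      ((p.2.2.2 = q.2.2.2 ∧ ((q.2.2.2 : ℕ) = 0 ∨ (q.2.2.2 : ℕ) = μ.length)) ∨
        (μ[(q.2.2.2 : ℕ)]? = some b ∧ (p.2.2.2 : ℕ) = (q.2.2.2 : ℕ) + 1))}
  start := {q | q.1 = M.start ∧ q.2.1 = M.start ∧ (q.2.2.1 : W) = 1 ∧ (q.2.2.2 : ℕ) = 0}
  accept := {q | q.1 ∈ M.accept ∧ q.2.1 ∈ M.accept ∧ (q.2.2.1 : W) = 1 ∧
      (q.2.2.2 : ℕ) = μ.length}

lemma mach_sound (α : List {x // x ∈ S}) (q) (hq : q ∈ (mach S k M μ).eval α) :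
    ∃ β : List {x // x ∈ S}, β.length = α.length ∧ q.1 = M.eval α ∧ q.2.1 = M.eval β ∧
      (q.2.2.1 : W) = (toElem S α)⁻¹ * toElem S β ∧
      ∃ β₁ β₂, β = β₁ ++ μ.take (q.2.2.2 : ℕ) ++ β₂ ∧
        ((q.2.2.2 : ℕ) = μ.length ∨ β₂ = []) := by
  induction α using List.reverseRecOn generalizing q with
  | nil =>
      obtain ⟨h1, h2, h3, h4⟩ := hq
      exact ⟨[], rfl, h1.symm ▸ rfl, h2.symm ▸ rfl, by simp [toElem, h3],
        [], [], by simp [h4], Or.inr rfl⟩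
  | append_singleton α a ih =>
      rw [NFA.eval_append_singleton, NFA.mem_stepSet] at hq
      obtain ⟨t, ht, h1, b, h2, h3, h4⟩ := hq
      obtain ⟨β, hblen, ht1, ht2, ht3, β₁, β₂, hsplit, hdisj⟩ := ih t ht
      refine ⟨β ++ [b], by simp [hblen], ?_, ?_, ?_, ?_⟩
      · rw [h1, ht1, DFA.eval_append_singleton]
      · rw [h2, ht2, DFA.eval_append_singleton]
      · rw [h3, ht3, toElem_append, toElem_append, toElem_singleton, toElem_singleton,
          mul_inv_rev]
        group
      · rcases h4 with ⟨hj, hj0⟩ | ⟨hget, hj⟩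
        · rcases hj0 with hz | hl
          · exact ⟨β ++ [b], [], by simp [hj, hz], Or.inr rfl⟩
          · refine ⟨β₁, β₂ ++ [b], ?_, Or.inl (by rw [hj]; exact hl)⟩
            rw [hsplit, hj, hl]
            simp
        · have hlt : (t.2.2.2 : ℕ) < μ.length := by
            by_contra h
            rw [List.getElem?_eq_none (by omega)] at hget
            exact nomatch hget
          have hβ₂ : β₂ = [] := by
            rcases hdisj with h | h
            · omega
            · exact h
          refine ⟨β₁, [], ?_, Or.inr rfl⟩
          rw [hsplit, hβ₂, hj, List.take_succ, hget]
          simp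

lemma mach_complete (α β₁ β₂ : List {x // x ∈ S})
    (hlen : (β₁ ++ μ ++ β₂).length = α.length)
    (hball : ∀ i, wlen S ((toElem S (α.take i))⁻¹ *
      toElem S ((β₁ ++ μ ++ β₂).take i)) ≤ k) :
    ∀ i, i ≤ α.length →
      (M.eval (α.take i), M.eval ((β₁ ++ μ ++ β₂).take i),
        ⟨(toElem S (α.take i))⁻¹ * toElem S ((β₁ ++ μ ++ β₂).take i), hball i⟩,
        ⟨min (i - β₁.length) μ.length, Nat.lt_succ_of_le (min_le_right _ _)⟩) ∈
        (mach S k M μ).eval (α.take i) := by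
  set β := β₁ ++ μ ++ β₂ with hβ
  intro i hi
  induction i with
  | zero =>
      simp only [List.take_zero]
      refine ⟨rfl, rfl, by simp [toElem], by simp⟩
  | succ i ih =>
      have hi' : i ≤ α.length := le_of_lt hi
      have hiα : i < α.length := hi
      have hiβ : i < β.length := by omega
      have htakeα : α.take (i + 1) = α.take i ++ [α[i]] := by
        rw [List.take_succ, List.getElem?_eq_getElem hiα]; rfl
      have htakeβ : β.take (i + 1) = β.take i ++ [β[i]] := by
        rw [List.take_succ, List.getElem?_eq_getElem hiβ]; rfl
      simp only [htakeα, ← hβ, htakeβ]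
      rw [NFA.eval_append_singleton, NFA.mem_stepSet]
      refine ⟨_, ih hi', ?_⟩
      refine ⟨M.eval_append_singleton _ _, β[i], M.eval_append_singleton _ _, ?_, ?_⟩
      · show (toElem S (α.take i ++ [α[i]]))⁻¹ * toElem S (β.take i ++ [β[i]]) =
          (α[i] : W)⁻¹ * ((toElem S (α.take i))⁻¹ * toElem S (β.take i)) * (β[i] : W)
        rw [toElem_append, toElem_append, toElem_singleton, toElem_singleton, mul_inv_rev]
        group
      · -- the j-transition
        simp only
        rcases Nat.lt_or_ge i β₁.length with h1 | h1
        · left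
          constructor
          · apply Fin.ext
            simp only
            omega
          · left; simp; omega
        · rcases Nat.lt_or_ge (i - β₁.length) μ.length with h2 | h2
          · right
            have hmin : min (i - β₁.length) μ.length = i - β₁.length := by omega
            have hmin' : min (i + 1 - β₁.length) μ.length = (i - β₁.length) + 1 := by omega
            constructor
            · rw [hmin]
              have : β[i]? = μ[i - β₁.length]? := by
                rw [hβ, List.append_assoc, List.getElem?_append_right h1,
                  List.getElem?_append_left h2]
              rw [← this, List.getElem?_eq_getElem hiβ]
            · simp [hmin, hmin']
          · left
            constructor
            · apply Fin.ext
              simp only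
              omega
            · right; simp; omega

/-- If `Red(W)` is regular with the `k`-fellow-traveler property, then for any fixed geodesic
word `μ`, the language of geodesic words representing elements of
`X_μ = {w : w = u.μ̄.v}` is regular. -/
theorem red_X_mu_regular (S : Finset W)
    (hgen : Subgroup.closure (S : Set W) = ⊤)
    (hsym : ∀ s ∈ S, s⁻¹ ∈ S) (k : ℕ)
    (hreg : (Red S).IsRegular)
    (hft : ∀ α ∈ Red S, ∀ β ∈ Red S, ∀ t : W, (t ∈ S ∨ t = 1) →
      toElem S α = toElem S β * t → FellowTravel S k α β)
    (μ : List {x // x ∈ S}) (hμ : μ ∈ Red S) :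
    Language.IsRegular
      ({α | α ∈ Red S ∧ toElem S α ∈
          {w : W | ∃ u v : W, w = u * toElem S μ * v ∧
            wlen S w = wlen S u + wlen S (toElem S μ) + wlen S v}} :
        Language {x // x ∈ S}) := by
  classical
  obtain ⟨σ0, fin0, M, hM⟩ := hreg
  haveI := fin0
  have hBfin : {w : W | wlen S w ≤ k}.Finite := by
    apply Set.Finite.subset ((List.finite_length_le {x // x ∈ S} k).image (toElem S))
    intro w hw
    obtain ⟨γ, hγ, hγl⟩ := exists_geodesic S hgen hsym w
    exact ⟨γ, by simp only [Set.mem_setOf_eq] at hw ⊢; omega, hγ⟩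
  haveI : Finite {w : W // wlen S w ≤ k} := hBfin.to_subtype
  haveI : Fintype (Set (σ0 × σ0 × {w : W // wlen S w ≤ k} × Fin (μ.length + 1))) :=
    Fintype.ofFinite _
  obtain ⟨n, ⟨e⟩⟩ : ∃ n, Nonempty
      (Set (σ0 × σ0 × {w : W // wlen S w ≤ k} × Fin (μ.length + 1)) ≃ Fin n) :=
    ⟨_, ⟨Fintype.equivFin _⟩⟩
  refine ⟨Fin n, inferInstance, DFA.reindex e (mach S k M μ).toDFA, ?_⟩
  rw [DFA.accepts_reindex, NFA.toDFA_correct]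
  ext α
  rw [NFA.mem_accepts]
  constructor
  · rintro ⟨q, hqacc, hqeval⟩
    obtain ⟨β, hblen, h1, h2, h3, β₁, β₂, hsplit, hdisj⟩ :=
      mach_sound S k M μ α q hqeval
    obtain ⟨hacc1, hacc2, hg, hj⟩ := hqacc
    have hαred : α ∈ Red S := by
      rw [← hM]; exact (DFA.mem_accepts M).2 (h1 ▸ hacc1)
    have hβred : β ∈ Red S := by
      rw [← hM]; exact (DFA.mem_accepts M).2 (h2 ▸ hacc2)
    have heq : toElem S β = toElem S α := by
      have h := h3.symm.trans hg
      rwa [inv_mul_eq_one, eq_comm] at h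
    have hsplit' : β = β₁ ++ μ ++ β₂ := by
      rw [hsplit, hj, List.take_length]
    refine ⟨hαred, toElem S β₁, toElem S β₂, ?_, ?_⟩
    · rw [← heq, hsplit', toElem_append, toElem_append]
    · have hwα : wlen S (toElem S α) = α.length := hαred.symm
      have hle : wlen S (toElem S α) ≤
          wlen S (toElem S β₁) + wlen S (toElem S μ) + wlen S (toElem S β₂) := by
        obtain ⟨γ₁, hγ₁, hγ₁l⟩ := exists_geodesic S hgen hsym (toElem S β₁)
        obtain ⟨γ₂, hγ₂, hγ₂l⟩ := exists_geodesic S hgen hsym (toElem S β₂)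
        have : toElem S (γ₁ ++ μ ++ γ₂) = toElem S α := by
          rw [toElem_append, toElem_append, hγ₁, hγ₂, ← heq, hsplit',
            toElem_append, toElem_append]
        calc wlen S (toElem S α) ≤ (γ₁ ++ μ ++ γ₂).length := wlen_le S this
          _ = wlen S (toElem S β₁) + wlen S (toElem S μ) + wlen S (toElem S β₂) := by
              have h3 : μ.length = wlen S (toElem S μ) := hμ
              simp only [List.length_append]
              omega
      have h1' : wlen S (toElem S β₁) ≤ β₁.length := wlen_le S rfl
      have h2' : wlen S (toElem S β₂) ≤ β₂.length := wlen_le S rfl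
      have hμl : wlen S (toElem S μ) = μ.length := hμ.symm
      have hβl : β.length = β₁.length + μ.length + β₂.length := by
        rw [hsplit']; simp only [List.length_append]
      omega
  · rintro ⟨hαred, u, v, hw, hlen⟩
    obtain ⟨β₁, hβ₁, hβ₁l⟩ := exists_geodesic S hgen hsym u
    obtain ⟨β₂, hβ₂, hβ₂l⟩ := exists_geodesic S hgen hsym v
    have hβelem : toElem S (β₁ ++ μ ++ β₂) = toElem S α := by
      rw [toElem_append, toElem_append, hβ₁, hβ₂, ← hw]
    have hμl : μ.length = wlen S (toElem S μ) := hμ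
    have hβred : (β₁ ++ μ ++ β₂) ∈ Red S := by
      show (β₁ ++ μ ++ β₂).length = wlen S (toElem S (β₁ ++ μ ++ β₂))
      rw [hβelem]
      simp only [List.length_append]
      omega
    have hblen : (β₁ ++ μ ++ β₂).length = α.length := by
      have hα : α.length = wlen S (toElem S α) := hαred
      have hβ : (β₁ ++ μ ++ β₂).length = wlen S (toElem S (β₁ ++ μ ++ β₂)) := hβred
      rw [hβ, hβelem, ← hα]
    have hft' : FellowTravel S k α (β₁ ++ μ ++ β₂) :=
      hft α hαred (β₁ ++ μ ++ β₂) hβred 1 (Or.inr rfl) (by rw [mul_one, hβelem])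
    have hball : ∀ i, wlen S ((toElem S (α.take i))⁻¹ *
        toElem S ((β₁ ++ μ ++ β₂).take i)) ≤ k := fun i => hft' i
    have key := mach_complete S k M μ α β₁ β₂ hblen hball α.length le_rfl
    have htα : α.take α.length = α := List.take_length
    have htβ : (β₁ ++ μ ++ β₂).take α.length = β₁ ++ μ ++ β₂ := by
      rw [← hblen]; exact List.take_length
    simp only [htα, htβ] at key
    refine ⟨_, ?_, key⟩
    refine ⟨?_, ?_, ?_, ?_⟩
    · exact (DFA.mem_accepts M).1 (by rw [hM]; exact hαred)
    · exact (DFA.mem_accepts M).1 (by rw [hM]; exact hβred)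
    · show (toElem S α)⁻¹ * toElem S (β₁ ++ μ ++ β₂) = 1
      rw [hβelem, inv_mul_cancel]
    · show min (α.length - β₁.length) μ.length = μ.length
      have : (β₁ ++ μ ++ β₂).length = β₁.length + μ.length + β₂.length := by
        simp only [List.length_append]
      omega

end Stmt5
end
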